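/- For every word w over the positive integers of length n, the plane tree 𝒯(w) has exactly n + 1 leaves. -/

import Mathlib

/-- A plane tree: a node carrying an ordered (possibly empty) list of subtrees.
A leaf is `node []`. -/
inductive PlaneTree where
  | node : List PlaneTree → PlaneTree

/-- Auxiliary, fuel-indexed version of the map `w ↦ 𝒯(w)` from words to plane trees.
If `w` is nonempty with greatest letter `m`, writing `w = v₀ m v₁ m ⋯ m v_k`
(splitting at the occurrences of `m`), the tree is obtained by grafting the trees of
`v₀, v₁, …, v_k` (in this order) on a common root; the empty word gives a leaf.
The fuel argument (any value `≥ w.length` gives the correct answer, since each factor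
`vᵢ` is strictly shorter than `w`) makes the recursion structural. -/
def treeOfAux : ℕ → List ℕ → PlaneTree
  | 0, _ => .node []
  | _ + 1, [] => .node []
  | n + 1, a :: l =>
      .node (((a :: l).splitOn ((a :: l).foldr max 0)).map (treeOfAux n))

/-- The plane tree `𝒯(w)` associated to a word `w` over the natural numbers:
`𝒯(ε)` is a leaf, and if `w` is nonempty with greatest letter `m` occurring exactly `k`
times, writing `w = v₀ m v₁ m ⋯ m v_k`, then `𝒯(w) = node [𝒯(v₀), 𝒯(v₁), …, 𝒯(v_k)]`. -/
def treeOf (w : List ℕ) : PlaneTree := treeOfAux w.length w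

/-- The rank of the letter `x` in the word `w`: one plus the number of distinct letters
of `w` smaller than `x`. -/
def rank (w : List ℕ) (x : ℕ) : ℕ := ((w.filter (· < x)).dedup).length + 1

/-- The packed word of a word `w`: if the distinct letters occurring in `w` are
`b₁ < b₂ < … < b_k`, each occurrence of `b_j` is replaced by `j`. -/
def pack (w : List ℕ) : List ℕ := w.map (rank w)

mutual
  /-- The number of leaves of a plane tree: a leaf `node []` has one leaf, and the
  number of leaves of `node [T₀, …, T_k]` (nonempty list) is the sum of the numbers of
  leaves of the `Tᵢ`. -/
  def PlaneTree.leaves : PlaneTree → ℕ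
    | .node [] => 1
    | .node (t :: ts) => t.leaves + leavesList ts

  /-- Sum of the numbers of leaves of a list of plane trees. -/
  def leavesList : List PlaneTree → ℕ
    | [] => 0
    | t :: ts => t.leaves + leavesList ts
end

lemma foldr_max_mem (a : ℕ) (l : List ℕ) : (a :: l).foldr max 0 ∈ a :: l := by
  induction l generalizing a with
  | nil => simp
  | cons b l ih =>
    rw [List.foldr_cons]
    rcases max_choice a ((b :: l).foldr max 0) with h | h
    · rw [h]; exact List.mem_cons_self
    · rw [h]; exact List.mem_cons_of_mem _ (ih b)

lemma two_le_splitOn_length {m : ℕ} {w : List ℕ} (h : m ∈ w) :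
    2 ≤ (w.splitOn m).length := by
  induction w with
  | nil => simp at h
  | cons a l ih =>
    rw [List.splitOn, List.splitOnP_cons]
    by_cases ha : a = m
    · simp only [ha, beq_self_eq_true, if_true, List.length_cons]
      have := List.splitOnP_ne_nil (· == m) l
      have : 1 ≤ (l.splitOnP (· == m)).length := List.length_pos_iff.mpr this
      omega
    · have hm : m ∈ l := by
        rcases List.mem_cons.mp h with h | h
        · exact absurd h.symm ha
        · exact h
      have := ih hm
      simp only [beq_iff_eq, ha, if_false, List.length_modifyHead]
      exact this

lemma length_intercalate (m : ℕ) : ∀ (ps : List (List ℕ)), ps ≠ [] →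
    (List.intercalate [m] ps).length + 1 = (ps.map List.length).sum + ps.length := by
  intro ps
  induction ps with
  | nil => simp
  | cons p ps ih =>
    intro _
    cases ps with
    | nil => simp [List.intercalate]
    | cons q ps =>
      have h2 := ih (by simp)
      have step : List.intercalate [m] (p :: q :: ps)
          = p ++ [m] ++ List.intercalate [m] (q :: ps) := by
        simp [List.intercalate, List.intersperse]
      rw [step, List.length_append, List.length_append]
      simp only [List.map_cons, List.sum_cons, List.length_cons, List.length_nil] at h2 ⊢
      omega

lemma leavesList_map (f : List ℕ → PlaneTree) : ∀ (ps : List (List ℕ)),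
    leavesList (ps.map f) = (ps.map (fun p => (f p).leaves)).sum := by
  intro ps
  induction ps with
  | nil => simp [leavesList]
  | cons p ps ih => simp [leavesList, ih]

lemma leaves_node_ne_nil (t : PlaneTree) (ts : List PlaneTree) :
    (PlaneTree.node (t :: ts)).leaves = leavesList (t :: ts) := rfl

lemma treeOfAux_leaves : ∀ (n : ℕ) (w : List ℕ), w.length ≤ n →
    (treeOfAux n w).leaves = w.length + 1 := by
  intro n
  induction n with
  | zero =>
    intro w hw
    have : w = [] := List.length_eq_zero_iff.mp (Nat.le_zero.mp hw)
    subst this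
    rfl
  | succ n ih =>
    intro w hw
    match w with
    | [] => rfl
    | a :: l =>
      have hmem : (a :: l).foldr max 0 ∈ a :: l := foldr_max_mem a l
      set m := (a :: l).foldr max 0 with hm
      have h2 : 2 ≤ ((a :: l).splitOn m).length := two_le_splitOn_length hmem
      have hinter : List.intercalate [m] ((a :: l).splitOn m) = a :: l :=
        List.intercalate_splitOn m
      have hlen : (a :: l).length + 1
          = (((a :: l).splitOn m).map List.length).sum + ((a :: l).splitOn m).length := by
        have := length_intercalate m ((a :: l).splitOn m)
          (by intro h; rw [h] at h2; simp at h2)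
        rw [hinter] at this
        omega
      have hpart : ∀ p ∈ (a :: l).splitOn m, p.length ≤ n := by
        intro p hp
        have : p.length ≤ (((a :: l).splitOn m).map List.length).sum :=
          List.le_sum_of_mem (List.mem_map_of_mem hp)
        simp only [List.length_cons] at hlen hw
        omega
      obtain ⟨p, ps', hps⟩ : ∃ p ps', (a :: l).splitOn m = p :: ps' := by
        cases h : (a :: l).splitOn m with
        | nil => rw [h] at h2; simp at h2
        | cons p ps' => exact ⟨p, ps', rfl⟩
      show (PlaneTree.node (((a :: l).splitOn m).map (treeOfAux n))).leaves
          = (a :: l).length + 1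
      rw [hps] at hlen hpart ⊢
      rw [List.map_cons, leaves_node_ne_nil, ← List.map_cons, leavesList_map]
      have hcong : ((p :: ps').map fun q => (treeOfAux n q).leaves)
          = ((p :: ps').map (fun q => q.length + 1)) :=
        List.map_congr_left fun q hq => ih q (hpart q hq)
      rw [hcong]
      have hsum : ((p :: ps').map (fun q => q.length + 1)).sum
          = ((p :: ps').map List.length).sum + (p :: ps').length := by
        clear * -
        induction ps' generalizing p with
        | nil => simp
        | cons q ps ih => simp [ih]; omega
      rw [hsum]
      simp only [List.length_cons] at hlen ⊢
      omega

/-- For every word `w` over the positive integers, of length `n`, the plane tree `𝒯(w)`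
has exactly `n + 1` leaves. -/
theorem leaves_treeOf (w : List ℕ) (hw : ∀ x ∈ w, 0 < x) :
    (treeOf w).leaves = w.length + 1 :=
  treeOfAux_leaves w.length w le_rfl
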